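/- Let T be a contraction on H, K := ker(Id − T*T), K⋆ := ker(Id − TT*), and A_T := {(x, Tx) : x ∈ K} ⊆ H × H. Then the symplectic orthogonal of A_T with respect to the standard symplectic form satisfies A_T^⊥s = {(y₁, y₂) ∈ H × H : y₁ − T*y₂ ∈ K^⊥} = {(y₁, y₂) ∈ H × H : Ty₁ − y₂ ∈ K⋆^⊥}. -/

import Mathlib

open scoped InnerProductSpace
open ContinuousLinearMap

/-- For a contraction `T` on `H`, `K = ker(Id − T*T)`,
`K⋆ = ker(Id − TT*)` and `A_T = {(x, Tx) : x ∈ K}`, the symplectic orthogonal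
of `A_T` with respect to the standard symplectic form
`[a,b] = i⟨a₁,b₁⟩ − i⟨a₂,b₂⟩` (inner products linear in the first variable)
equals `{(y₁,y₂) : y₁ − T*y₂ ∈ K^⊥}` and equals `{(y₁,y₂) : Ty₁ − y₂ ∈ K⋆^⊥}`. -/
theorem symplecticOrthogonal_of_unitary_part_graph
    {H : Type*} [NormedAddCommGroup H] [InnerProductSpace ℂ H] [CompleteSpace H]
    (T : H →L[ℂ] H) (hT : ‖T‖ ≤ 1)
    (K Ks : Submodule ℂ H)
    (hK : K = LinearMap.ker ((1 - adjoint T ∘L T : H →L[ℂ] H) : H →ₗ[ℂ] H))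
    (hKs : Ks = LinearMap.ker ((1 - T ∘L adjoint T : H →L[ℂ] H) : H →ₗ[ℂ] H))
    (AT : Set (H × H)) (hAT : AT = {p : H × H | ∃ x ∈ K, p = (x, T x)})
    (ATs : Set (H × H))
    (hATs : ATs = {a : H × H | ∀ b ∈ AT,
      Complex.I * ⟪b.1, a.1⟫_ℂ - Complex.I * ⟪b.2, a.2⟫_ℂ = 0}) :
    ATs = {y : H × H | y.1 - adjoint T y.2 ∈ Kᗮ} ∧
    ATs = {y : H × H | T y.1 - y.2 ∈ Ksᗮ} := by
  -- membership in K, Ks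
  have hKmem : ∀ x : H, x ∈ K ↔ adjoint T (T x) = x := by
    intro x
    rw [hK, LinearMap.mem_ker]
    show (1 - adjoint T ∘L T) x = 0 ↔ _
    rw [ContinuousLinearMap.sub_apply, ContinuousLinearMap.comp_apply,
      ContinuousLinearMap.one_apply, sub_eq_zero, eq_comm]
  have hKsmem : ∀ x : H, x ∈ Ks ↔ T (adjoint T x) = x := by
    intro x
    rw [hKs, LinearMap.mem_ker]
    show (1 - T ∘L adjoint T) x = 0 ↔ _
    rw [ContinuousLinearMap.sub_apply, ContinuousLinearMap.comp_apply,
      ContinuousLinearMap.one_apply, sub_eq_zero, eq_comm]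
  have hTK : ∀ x ∈ K, T x ∈ Ks := by
    intro x hx
    rw [hKsmem]
    rw [hKmem] at hx
    rw [hx]
  have hTsKs : ∀ x ∈ Ks, adjoint T x ∈ K := by
    intro x hx
    rw [hKmem]
    rw [hKsmem] at hx
    rw [hx]
  -- characterization of ATs
  have hmem : ∀ y : H × H, y ∈ ATs ↔ ∀ x ∈ K, ⟪x, y.1⟫_ℂ = ⟪T x, y.2⟫_ℂ := by
    intro y
    rw [hATs, Set.mem_setOf_eq]
    constructor
    · intro h x hx
      have := h (x, T x) (by rw [hAT]; exact ⟨x, hx, rfl⟩)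
      simp only at this
      rw [← mul_sub, mul_eq_zero, sub_eq_zero] at this
      exact this.resolve_left Complex.I_ne_zero
    · intro h b hb
      rw [hAT] at hb
      obtain ⟨x, hx, rfl⟩ := hb
      simp only
      rw [← mul_sub, h x hx, sub_self, mul_zero]
  constructor
  · ext y
    rw [hmem, Set.mem_setOf_eq, Submodule.mem_orthogonal]
    constructor
    · intro h u hu
      rw [inner_sub_right, adjoint_inner_right, h u hu, sub_self]
    · intro h x hx
      have := h x hx
      rw [inner_sub_right, adjoint_inner_right, sub_eq_zero] at this
      exact this
  · ext y
    rw [hmem, Set.mem_setOf_eq, Submodule.mem_orthogonal]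
    constructor
    · intro h u hu
      have h1 : adjoint T u ∈ K := hTsKs u hu
      have h2 : T (adjoint T u) = u := (hKsmem u).mp hu
      rw [inner_sub_right, sub_eq_zero, ← adjoint_inner_left, h (adjoint T u) h1, h2]
    · intro h x hx
      have h1 : T x ∈ Ks := hTK x hx
      have h2 : adjoint T (T x) = x := (hKmem x).mp hx
      have := h (T x) h1
      rw [inner_sub_right, sub_eq_zero] at this
      calc ⟪x, y.1⟫_ℂ = ⟪adjoint T (T x), y.1⟫_ℂ := by rw [h2]
        _ = ⟪T x, T y.1⟫_ℂ := by rw [adjoint_inner_left]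
        _ = ⟪T x, y.2⟫_ℂ := this
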